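/- Let m, n ∈ ℕ, let 0 < q_ℓ < 1 for 1 ≤ ℓ ≤ m, and let v_{j,ℓ} ∈ ℂ satisfy q_ℓ·e^{4π|Im(v_{j,ℓ})|} < 1 for all 1 ≤ j ≤ n, 1 ≤ ℓ ≤ m. Then the n×n complex matrix whose (j,k) entry is ∏_{ℓ=1}^{m} D_ℓ(v_{j,ℓ} − conj(v_{k,ℓ})), where D_ℓ(v) = ∑_{r∈ℤ} (q_ℓ^r/(1+q_ℓ^{2r})) e^{2πirv}, is positive semidefinite. -/

import Mathlib

open Complex ComplexOrder

/-- The Fourier series `D(v) = ∑_{r ∈ ℤ} (q^r / (1 + q^{2r})) e^{2πirv}`. -/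
noncomputable def dnFourier (q : ℝ) (v : ℂ) : ℂ :=
  ∑' r : ℤ, ((q : ℂ) ^ r / (1 + (q : ℂ) ^ (2 * r))) * Complex.exp (2 * Real.pi * Complex.I * r * v)

/-- The (real) coefficient of the Fourier series. -/
noncomputable def dnCoef (q : ℝ) (r : ℤ) : ℝ := q ^ r / (1 + q ^ (2 * r))

/-- The exponential `e^{2πirw}`. -/
noncomputable def dnE (r : ℤ) (w : ℂ) : ℂ := Complex.exp (2 * Real.pi * Complex.I * r * w)

lemma dnCoef_nonneg {q : ℝ} (hq : 0 < q) (r : ℤ) : 0 ≤ dnCoef q r := by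
  unfold dnCoef; positivity

lemma dnCoef_le {q : ℝ} (hq : 0 < q) (r : ℤ) : dnCoef q r ≤ q ^ r.natAbs := by
  have hqr : (0:ℝ) < q ^ r := zpow_pos hq r
  have hqr' : (0:ℝ) < q ^ (-r) := zpow_pos hq (-r)
  have h1 : q ^ r * q ^ (-r) = 1 := by
    rw [← zpow_add₀ hq.ne']; simp
  have h2 : q ^ r * q ^ r = q ^ (2*r) := by
    rw [← zpow_add₀ hq.ne', two_mul]
  have key : dnCoef q r = (q ^ (-r) + q ^ r)⁻¹ := by
    unfold dnCoef
    rw [div_eq_iff (by positivity), inv_mul_eq_div, eq_div_iff (by positivity)]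
    linear_combination h1 + h2
  have habs : (q:ℝ) ^ (r.natAbs : ℕ) = (q ^ (-(r.natAbs:ℤ)))⁻¹ := by
    rw [zpow_neg, inv_inv, zpow_natCast]
  rw [key, habs]
  apply inv_anti₀ (zpow_pos hq _)
  rcases le_or_gt 0 r with h | h
  · have : -(r.natAbs : ℤ) = -r := by omega
    rw [this]; exact le_add_of_nonneg_right hqr.le
  · have : -(r.natAbs : ℤ) = r := by omega
    rw [this]; exact le_add_of_nonneg_left hqr'.le

lemma dnE_norm (r : ℤ) (w : ℂ) : ‖dnE r w‖ = Real.exp (-(2 * Real.pi * r * w.im)) := by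
  unfold dnE
  rw [Complex.norm_exp]
  congr 1
  simp [Complex.mul_re, Complex.mul_im]

lemma dnE_norm_le (r : ℤ) (w : ℂ) :
    ‖dnE r w‖ ≤ (Real.exp (2 * Real.pi * |w.im|)) ^ r.natAbs := by
  rw [dnE_norm, ← Real.exp_nat_mul]
  apply Real.exp_le_exp.mpr
  have hx : -((r:ℝ) * w.im) ≤ |(r:ℝ)| * |w.im| := by
    rw [← abs_mul]; exact neg_le_abs _
  calc -(2 * Real.pi * (r:ℝ) * w.im) = 2 * Real.pi * (-((r:ℝ) * w.im)) := by ring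
    _ ≤ 2 * Real.pi * (|(r:ℝ)| * |w.im|) :=
        mul_le_mul_of_nonneg_left hx (by positivity)
    _ = (r.natAbs : ℝ) * (2 * Real.pi * |w.im|) := by
        rw [Nat.cast_natAbs]; push_cast; ring

/-- Summability in norm of the term family. -/
lemma dn_term_summable {q : ℝ} (hq0 : 0 < q) (hq1 : q < 1) {w z : ℂ}
    (hw : q * Real.exp (4 * Real.pi * |w.im|) < 1)
    (hz : q * Real.exp (4 * Real.pi * |z.im|) < 1) :
    Summable fun r : ℤ => ‖((dnCoef q r : ℂ)) * (dnE r w * (starRingEnd ℂ) (dnE r z))‖ := by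
  set t : ℝ := q * (Real.exp (2 * Real.pi * |w.im|) * Real.exp (2 * Real.pi * |z.im|)) with ht
  have ht0 : 0 < t := by positivity
  have ht1 : t < 1 := by
    have e1 : Real.exp (4 * Real.pi * |w.im|) =
        Real.exp (2 * Real.pi * |w.im|) * Real.exp (2 * Real.pi * |w.im|) := by
      rw [← Real.exp_add]; ring_nf
    have e2 : Real.exp (4 * Real.pi * |z.im|) =
        Real.exp (2 * Real.pi * |z.im|) * Real.exp (2 * Real.pi * |z.im|) := by
      rw [← Real.exp_add]; ring_nf
    have hsq : t * t = (q * Real.exp (4 * Real.pi * |w.im|)) *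
        (q * Real.exp (4 * Real.pi * |z.im|)) := by
      rw [ht, e1, e2]; ring
    have hw0 : 0 < q * Real.exp (4 * Real.pi * |w.im|) := by positivity
    have hz0 : 0 < q * Real.exp (4 * Real.pi * |z.im|) := by positivity
    nlinarith
  have hgeom : Summable fun r : ℤ => t ^ r.natAbs := by
    apply Summable.of_nat_of_neg
    · simpa using summable_geometric_of_lt_one ht0.le ht1
    · simpa using summable_geometric_of_lt_one ht0.le ht1
  apply Summable.of_nonneg_of_le (fun r => norm_nonneg _) _ hgeom
  intro r
  rw [norm_mul, norm_mul, RCLike.norm_conj, Complex.norm_real,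
    Real.norm_of_nonneg (dnCoef_nonneg hq0 r)]
  calc dnCoef q r * (‖dnE r w‖ * ‖dnE r z‖)
      ≤ q ^ r.natAbs * ((Real.exp (2 * Real.pi * |w.im|)) ^ r.natAbs *
        (Real.exp (2 * Real.pi * |z.im|)) ^ r.natAbs) := by
        apply mul_le_mul (dnCoef_le hq0 r) _ (by positivity) (by positivity)
        exact mul_le_mul (dnE_norm_le r w) (dnE_norm_le r z) (norm_nonneg _) (by positivity)
    _ = t ^ r.natAbs := by rw [ht, mul_pow, mul_pow]

/-- Rewriting `dnFourier` at a point `w - conj z`. -/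
lemma dnFourier_eq (q : ℝ) (w z : ℂ) :
    dnFourier q (w - (starRingEnd ℂ) z) =
      ∑' r : ℤ, ((dnCoef q r : ℂ)) * (dnE r w * (starRingEnd ℂ) (dnE r z)) := by
  unfold dnFourier dnE
  congr 1
  funext r
  have hcoef : ((q : ℂ) ^ r / (1 + (q : ℂ) ^ (2 * r))) = ((dnCoef q r : ℝ) : ℂ) := by
    unfold dnCoef; push_cast; ring
  rw [hcoef]
  have hexp : Complex.exp (2 * Real.pi * Complex.I * r * (w - (starRingEnd ℂ) z)) =
      Complex.exp (2 * Real.pi * Complex.I * r * w) *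
        (starRingEnd ℂ) (Complex.exp (2 * Real.pi * Complex.I * r * z)) := by
    rw [← Complex.exp_conj, ← Complex.exp_add]
    congr 1
    simp only [map_mul, Complex.conj_I, Complex.conj_ofReal, map_ofNat, map_intCast]
    ring
  rw [hexp]

/-- Product of finitely many absolutely convergent sums over `ℤ` as a sum over a pi type. -/
lemma dn_pi_aux {m : ℕ} (f : Fin m → ℤ → ℂ) (hf : ∀ i, Summable fun r => ‖f i r‖) :
    Summable (fun R : Fin m → ℤ => ‖∏ i, f i (R i)‖) ∧
      HasSum (fun R : Fin m → ℤ => ∏ i, f i (R i)) (∏ i, ∑' r, f i r) := by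
  induction m with
  | zero =>
      have hu : ∀ R : Fin 0 → ℤ, (∏ i, f i (R i)) = 1 := by
        intro R; simp
      haveI : Finite (Fin 0 → ℤ) := Finite.of_subsingleton
      constructor
      · exact Summable.of_finite
      · simp only [Finset.univ_eq_empty, Finset.prod_empty]
        exact hasSum_single (f := fun _ : Fin 0 → ℤ => (1:ℂ)) default
          (fun b hb => absurd (Subsingleton.elim b default) hb)
  | succ m ih =>
      obtain ⟨ihS, ihH⟩ := ih (fun i => f i.succ) (fun i => hf i.succ)
      set e := Fin.consEquiv (fun _ : Fin (m+1) => ℤ) with he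
      have key : ∀ x : ℤ × (Fin m → ℤ),
          (∏ i, f i (e x i)) = f 0 x.1 * ∏ i, f i.succ (x.2 i) := by
        intro x
        have hex : e x = Fin.cons x.1 x.2 := by funext i; rw [he, Fin.consEquiv_apply]
        rw [Fin.prod_univ_succ, hex]
        simp [Fin.cons_zero, Fin.cons_succ]
      have hmulnorm : Summable fun x : ℤ × (Fin m → ℤ) =>
          ‖f 0 x.1 * ∏ i, f i.succ (x.2 i)‖ := by
        apply Summable.mul_norm (hf 0) ihS
      constructor
      · refine e.summable_iff.mp ?_
        have : (fun R : Fin (m+1) → ℤ => ‖∏ i, f i (R i)‖) ∘ e =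
            fun x : ℤ × (Fin m → ℤ) => ‖f 0 x.1 * ∏ i, f i.succ (x.2 i)‖ := by
          funext x; simp only [Function.comp_apply, key]
        rw [this]; exact hmulnorm
      · have hH : HasSum (fun x : ℤ × (Fin m → ℤ) => f 0 x.1 * ∏ i : Fin m, f i.succ (x.2 i))
            ((∑' r, f 0 r) * ∏ i : Fin m, ∑' r, f i.succ r) := by
          apply HasSum.mul ((hf 0).of_norm.hasSum) ihH (hmulnorm.of_norm)
        rw [Fin.prod_univ_succ]
        refine e.hasSum_iff.mp ?_
        have : (fun R : Fin (m+1) → ℤ => ∏ i, f i (R i)) ∘ e =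
            fun x : ℤ × (Fin m → ℤ) => f 0 x.1 * ∏ i, f i.succ (x.2 i) := by
          funext x; simp only [Function.comp_apply, key]
        rw [this]; exact hH

/-- For `m, n ∈ ℕ`, `0 < q_ℓ < 1` and `v_{j,ℓ} ∈ ℂ` with `q_ℓ·e^{4π|Im v_{j,ℓ}|} < 1`, the
matrix with `(j,k)` entry `∏_{ℓ=1}^m D_ℓ(v_{j,ℓ} - conj v_{k,ℓ})` is positive semidefinite. -/
theorem dn_product_matrix_posSemidef (m n : ℕ) (q : Fin m → ℝ)
    (hq0 : ∀ l, 0 < q l) (hq1 : ∀ l, q l < 1) (v : Fin n → Fin m → ℂ)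
    (hv : ∀ j l, q l * Real.exp (4 * Real.pi * |(v j l).im|) < 1) :
    ∀ c : Fin n → ℂ,
      0 ≤ ∑ j : Fin n, ∑ k : Fin n,
        (∏ l : Fin m, dnFourier (q l) (v j l - (starRingEnd ℂ) (v k l)))
          * c j * (starRingEnd ℂ) (c k) := by
  intro c
  -- the term family
  set F : Fin n → Fin n → Fin m → ℤ → ℂ := fun j k l r =>
    ((dnCoef (q l) r : ℂ)) * (dnE r (v j l) * (starRingEnd ℂ) (dnE r (v k l))) with hF
  have hFsummable : ∀ j k l, Summable fun r => ‖F j k l r‖ := fun j k l =>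
    dn_term_summable (hq0 l) (hq1 l) (hv j l) (hv k l)
  have haux : ∀ j k, Summable (fun R : Fin m → ℤ => ‖∏ l, F j k l (R l)‖) ∧
      HasSum (fun R : Fin m → ℤ => ∏ l, F j k l (R l)) (∏ l, ∑' r, F j k l r) :=
    fun j k => dn_pi_aux (F j k) (hFsummable j k)
  have entry : ∀ j k, (∏ l : Fin m, dnFourier (q l) (v j l - (starRingEnd ℂ) (v k l)))
      = ∑' R : Fin m → ℤ, ∏ l, F j k l (R l) := by
    intro j k
    have h1 : (∏ l : Fin m, dnFourier (q l) (v j l - (starRingEnd ℂ) (v k l)))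
        = ∏ l, ∑' r, F j k l r := by
      refine Finset.prod_congr rfl fun l _ => ?_
      rw [hF]
      exact dnFourier_eq (q l) (v j l) (v k l)
    rw [h1]
    exact ((haux j k).2.tsum_eq).symm
  simp only [entry]
  -- pull the constants into the tsum
  have step1 : ∀ j k, (∑' R : Fin m → ℤ, ∏ l, F j k l (R l)) * c j * (starRingEnd ℂ) (c k)
      = ∑' R : Fin m → ℤ, (∏ l, F j k l (R l)) * c j * (starRingEnd ℂ) (c k) := by
    intro j k
    rw [tsum_mul_right, tsum_mul_right]
  simp only [step1]
  -- convert to a sum over the product finset and swap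
  rw [← Finset.sum_product', Finset.univ_product_univ]
  rw [← Summable.tsum_finsetSum (f := fun (p : Fin n × Fin n) (R : Fin m → ℤ) =>
      (∏ l, F p.1 p.2 l (R l)) * c p.1 * (starRingEnd ℂ) (c p.2))
      (fun p _ => (((haux p.1 p.2).1.of_norm.mul_right (c p.1)).mul_right _))]
  apply tsum_nonneg
  intro R
  -- each term is a nonnegative multiple of |z|^2
  have hterm : ∀ j k, (∏ l, F j k l (R l)) =
      ((∏ l, dnCoef (q l) (R l) : ℝ) : ℂ) *
        ((∏ l, dnE (R l) (v j l)) * (starRingEnd ℂ) (∏ l, dnE (R l) (v k l))) := by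
    intro j k
    rw [hF]
    push_cast
    rw [map_prod]
    rw [← Finset.prod_mul_distrib, ← Finset.prod_mul_distrib]
  have key : (∑ p : Fin n × Fin n, (∏ l, F p.1 p.2 l (R l)) * c p.1 * (starRingEnd ℂ) (c p.2))
      = ((∏ l, dnCoef (q l) (R l) : ℝ) : ℂ) *
        ((∑ j : Fin n, (∏ l, dnE (R l) (v j l)) * c j) *
          (starRingEnd ℂ) (∑ j : Fin n, (∏ l, dnE (R l) (v j l)) * c j)) := by
    rw [← Finset.univ_product_univ, Finset.sum_product]
    rw [map_sum, Finset.sum_mul_sum, Finset.mul_sum]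
    apply Finset.sum_congr rfl
    intro j _
    rw [Finset.mul_sum]
    apply Finset.sum_congr rfl
    intro k _
    rw [hterm j k, map_mul]
    ring
  rw [key, mul_conj]
  rw [← Complex.ofReal_mul]
  rw [Complex.zero_le_real]
  apply mul_nonneg
  · exact Finset.prod_nonneg fun l _ => dnCoef_nonneg (hq0 l) _
  · exact Complex.normSq_nonneg _
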